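/- arXiv:1703.01937 — 3 statements merged into one kernel-verified Lean document; each statement's English description precedes it below -/
import Mathlib

section
/- Let β ∈ [0, 1), let Π be a row-stochastic matrix on a nonempty finite set Ω, let ν be a Borel probability measure on ℝ with finite first moment with g(a) = ∫ max(a − c, 0) dν(c), and for a revenue function θ̂ : Ω → ℝ let c̄*(θ̂) denote the unique fixed point of the cutoff operator S associated with θ̂. Then the equilibrium cutoffs are monotone and Lipschitz in the revenue function: if θ̂(ω) ≤ θ̂′(ω) for all ω, then c̄*(θ̂)(ω) ≤ c̄*(θ̂′)(ω) for all ω; and for arbitrary θ̂, θ̂′, ‖c̄*(θ̂) − c̄*(θ̂′)‖ ≤ ‖θ̂ − θ̂′‖ / (1 − β) in the sup norm. -/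
open MeasureTheory Finset

/-- The expected value of the option to stay at cutoff `a`: `g(a) = ∫ max(a − c, 0) dν(c)`. -/
noncomputable def gfun (ν : Measure ℝ) (a : ℝ) : ℝ := ∫ c, max (a - c) 0 ∂ν

/-- The cutoff operator `S`: `(S x)(ω) = θ̂(ω) + β Σ_{ω'} Π(ω,ω') g(x(ω'))`. -/
noncomputable def cutoffOp {Ω : Type*} [Fintype Ω] (β : ℝ) (P : Ω → Ω → ℝ) (θhat : Ω → ℝ)
    (ν : Measure ℝ) (x : Ω → ℝ) (ω : Ω) : ℝ :=
  θhat ω + β * ∑ ω', P ω ω' * gfun ν (x ω')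

lemma integrable_maxsub (ν : Measure ℝ) [IsProbabilityMeasure ν]
    (hν : Integrable (fun c : ℝ => c) ν) (a : ℝ) :
    Integrable (fun c => max (a - c) 0) ν := by
  apply Integrable.mono' ((integrable_const |a|).add hν.abs)
  · exact (((continuous_const.sub continuous_id).max continuous_const)).aestronglyMeasurable
  · filter_upwards with c
    have h1 : ‖max (a - c) 0‖ ≤ |a - c| := by
      rw [Real.norm_eq_abs, abs_of_nonneg (le_max_right _ _)]
      exact le_trans (max_le (le_abs_self _) (abs_nonneg _)) le_rfl
    calc ‖max (a - c) 0‖ ≤ |a - c| := h1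
      _ ≤ |a| + |c| := abs_sub _ _

lemma gfun_mono (ν : Measure ℝ) [IsProbabilityMeasure ν]
    (hν : Integrable (fun c : ℝ => c) ν) {a b : ℝ} (h : a ≤ b) :
    gfun ν a ≤ gfun ν b := by
  apply integral_mono (integrable_maxsub ν hν a) (integrable_maxsub ν hν b)
  intro c
  exact max_le_max (sub_le_sub_right h c) le_rfl

lemma gfun_lip (ν : Measure ℝ) [IsProbabilityMeasure ν]
    (hν : Integrable (fun c : ℝ => c) ν) (a b : ℝ) :
    |gfun ν a - gfun ν b| ≤ |a - b| := by
  have hi := integrable_maxsub ν hν a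
  have hib := integrable_maxsub ν hν b
  rw [gfun, gfun, ← integral_sub hi hib]
  calc |∫ c, (max (a - c) 0 - max (b - c) 0) ∂ν|
      ≤ ∫ c, |max (a - c) 0 - max (b - c) 0| ∂ν := by
        simpa [Real.norm_eq_abs] using
          norm_integral_le_integral_norm (fun c => max (a - c) 0 - max (b - c) 0) (μ := ν)
    _ ≤ ∫ _c, |a - b| ∂ν := by
        apply integral_mono (hi.sub hib).abs (integrable_const _)
        intro c
        have := abs_max_sub_max_le_abs (a - c) (b - c) 0
        simpa using this
    _ = |a - b| := by simp

lemma gfun_diff_le (ν : Measure ℝ) [IsProbabilityMeasure ν]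
    (hν : Integrable (fun c : ℝ => c) ν) (a b : ℝ) :
    gfun ν a - gfun ν b ≤ max (a - b) 0 := by
  rcases le_total a b with h | h
  · have := gfun_mono ν hν h
    have h2 : gfun ν a - gfun ν b ≤ 0 := by linarith
    exact h2.trans (le_max_right _ _)
  · have := gfun_lip ν hν a b
    have h2 : gfun ν a - gfun ν b ≤ |a - b| := le_trans (le_abs_self _) this
    rw [abs_of_nonneg (by linarith)] at h2
    exact h2.trans (le_max_left _ _)

/-- The equilibrium cutoffs (the fixed points of the cutoff operator) are
monotone in the revenue function `θ̂`, and Lipschitz in it with constant `1/(1 − β)` in the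
sup norm. -/
theorem cutoff_fixed_point_monotone_and_lipschitz_in_revenue
    {Ω : Type*} [Fintype Ω] [Nonempty Ω]
    (β : ℝ) (hβ0 : 0 ≤ β) (hβ1 : β < 1)
    (P : Ω → Ω → ℝ) (hP0 : ∀ ω ω', 0 ≤ P ω ω') (hP1 : ∀ ω, ∑ ω', P ω ω' = 1)
    (ν : Measure ℝ) [IsProbabilityMeasure ν] (hν : Integrable (fun c : ℝ => c) ν)
    (θhat θhat' cbar cbar' : Ω → ℝ)
    (hfix : cutoffOp β P θhat ν cbar = cbar)
    (hfix' : cutoffOp β P θhat' ν cbar' = cbar') :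
    ((∀ ω, θhat ω ≤ θhat' ω) → ∀ ω, cbar ω ≤ cbar' ω) ∧
    ‖cbar - cbar'‖ ≤ ‖θhat - θhat'‖ / (1 - β) := by
  have hβ1' : (0:ℝ) < 1 - β := by linarith
  have hdiff : ∀ ω, cbar ω - cbar' ω =
      (θhat ω - θhat' ω) + β * ∑ ω', P ω ω' * (gfun ν (cbar ω') - gfun ν (cbar' ω')) := by
    intro ω
    have h1 := congrFun hfix ω
    have h2 := congrFun hfix' ω
    rw [cutoffOp] at h1 h2
    rw [← h1, ← h2]
    simp only [mul_sub, Finset.sum_sub_distrib]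
    ring
  constructor
  · intro hθ ω
    set m := Finset.univ.sup' Finset.univ_nonempty (fun ω => cbar ω - cbar' ω) with hm
    obtain ⟨ω₀, -, hω₀⟩ := Finset.exists_mem_eq_sup' Finset.univ_nonempty
      (fun ω => cbar ω - cbar' ω)
    have hmle : cbar ω₀ - cbar' ω₀ ≤ β * max m 0 := by
      rw [hdiff ω₀]
      have hsum : ∑ ω', P ω₀ ω' * (gfun ν (cbar ω') - gfun ν (cbar' ω')) ≤
          ∑ ω', P ω₀ ω' * max m 0 := by
        apply Finset.sum_le_sum
        intro i _
        apply mul_le_mul_of_nonneg_left _ (hP0 _ _)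
        refine (gfun_diff_le ν hν _ _).trans (max_le_max ?_ le_rfl)
        exact Finset.le_sup' (fun ω => cbar ω - cbar' ω) (Finset.mem_univ i)
      have hθ0 : θhat ω₀ - θhat' ω₀ ≤ 0 := by linarith [hθ ω₀]
      have : ∑ ω', P ω₀ ω' * max m 0 = max m 0 := by
        rw [← Finset.sum_mul, hP1, one_mul]
      nlinarith [hsum, hθ0]
    have hm2 : m ≤ β * max m 0 := le_of_eq_of_le (hm.trans hω₀) hmle
    have hm0 : m ≤ 0 := by
      by_contra h
      push_neg at h
      rw [max_eq_left h.le] at hm2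
      nlinarith
    have := Finset.le_sup' (fun ω => cbar ω - cbar' ω) (Finset.mem_univ ω)
    rw [← hm] at this
    linarith
  · set M := ‖θhat - θhat'‖ with hM
    set D := ‖cbar - cbar'‖ with hD
    have hM0 : 0 ≤ M := norm_nonneg _
    have hD0 : 0 ≤ D := norm_nonneg _
    have key : D ≤ M + β * D := by
      rw [hD]
      apply pi_norm_le_iff_of_nonneg (by positivity) |>.2
      intro ω
      rw [Pi.sub_apply, Real.norm_eq_abs, hdiff ω]
      have hθb : |θhat ω - θhat' ω| ≤ M := by
        have := norm_le_pi_norm (θhat - θhat') ω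
        simpa [Real.norm_eq_abs] using this
      have hsb : |∑ ω', P ω ω' * (gfun ν (cbar ω') - gfun ν (cbar' ω'))| ≤ D := by
        calc |∑ ω', P ω ω' * (gfun ν (cbar ω') - gfun ν (cbar' ω'))|
            ≤ ∑ ω', |P ω ω' * (gfun ν (cbar ω') - gfun ν (cbar' ω'))| :=
              Finset.abs_sum_le_sum_abs _ _
          _ ≤ ∑ ω', P ω ω' * D := by
              apply Finset.sum_le_sum
              intro i _
              rw [abs_mul, abs_of_nonneg (hP0 _ _)]
              apply mul_le_mul_of_nonneg_left _ (hP0 _ _)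
              refine (gfun_lip ν hν _ _).trans ?_
              have := norm_le_pi_norm (cbar - cbar') i
              simpa [Real.norm_eq_abs] using this
          _ = D := by rw [← Finset.sum_mul, hP1, one_mul]
      calc |(θhat ω - θhat' ω) + β * ∑ ω', P ω ω' * (gfun ν (cbar ω') - gfun ν (cbar' ω'))|
          ≤ |θhat ω - θhat' ω| + |β * ∑ ω', P ω ω' * (gfun ν (cbar ω') - gfun ν (cbar' ω'))| :=
            abs_add_le _ _
        _ ≤ M + β * D := by
            rw [abs_mul, abs_of_nonneg hβ0]
            exact add_le_add hθb (mul_le_mul_of_nonneg_left hsb hβ0)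
    rw [le_div_iff₀ hβ1']
    nlinarith
end

section
/- Let Ω be a nonempty finite set, let Π be an irreducible row-stochastic matrix on Ω, let τ : Ω → (0, 1) be staying probabilities with 0 < τ(ω) < 1 for every ω, and let η : Ω → [0, ∞) be not identically zero. Then the unique μ : Ω → [0, ∞) satisfying the stationarity condition μ(ω′) = Σ_ω Π(ω, ω′) τ(ω) μ(ω) + η(ω′) for all ω′ is strictly positive: μ(ω) > 0 for every ω ∈ Ω. In particular, there is a positive mass of sellers in every state, so beliefs conditional on the state are well-defined in every state. -/
open Finset

/-- If `Π` is an irreducible row-stochastic matrix on a nonempty finite set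
`Ω`, `τ : Ω → (0,1)`, and `η : Ω → [0,∞)` is not identically zero, then any nonnegative `μ`
satisfying the stationarity condition `μ(ω') = Σ_ω Π(ω,ω') τ(ω) μ(ω) + η(ω')` is strictly
positive in every state: there is a positive mass of sellers in every state. -/
theorem stationary_mass_pos_of_irreducible
    {Ω : Type*} [Fintype Ω] [DecidableEq Ω] [Nonempty Ω]
    (P : Matrix Ω Ω ℝ) (hP0 : ∀ ω ω', 0 ≤ P ω ω') (hP1 : ∀ ω, ∑ ω', P ω ω' = 1)
    (hPirr : ∀ ω ω', ∃ n : ℕ, 1 ≤ n ∧ 0 < (P ^ n) ω ω')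
    (τ : Ω → ℝ) (hτ : ∀ ω, 0 < τ ω ∧ τ ω < 1)
    (η : Ω → ℝ) (hη0 : ∀ ω, 0 ≤ η ω) (hη : ∃ ω, η ω ≠ 0)
    (μ : Ω → ℝ) (hμ0 : ∀ ω, 0 ≤ μ ω)
    (hμ : ∀ ω', μ ω' = ∑ ω, P ω ω' * τ ω * μ ω + η ω') :
    ∀ ω, 0 < μ ω := by
  -- seed: μ is positive at a state where η is positive
  obtain ⟨ω₀, hω₀⟩ := hη
  have hμω₀ : 0 < μ ω₀ := by
    rw [hμ ω₀]
    have h1 : 0 ≤ ∑ ω, P ω ω₀ * τ ω * μ ω :=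
      Finset.sum_nonneg fun ω _ =>
        mul_nonneg (mul_nonneg (hP0 ω ω₀) (hτ ω).1.le) (hμ0 ω)
    have h2 : 0 < η ω₀ := lt_of_le_of_ne (hη0 ω₀) (Ne.symm hω₀)
    linarith
  -- one-step propagation
  have step : ∀ ω ω', 0 < μ ω → 0 < P ω ω' → 0 < μ ω' := by
    intro ω ω' hμω hP
    rw [hμ ω']
    have hterm : 0 < P ω ω' * τ ω * μ ω :=
      mul_pos (mul_pos hP (hτ ω).1) hμω
    have hsum : P ω ω' * τ ω * μ ω ≤ ∑ w, P w ω' * τ w * μ w :=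
      Finset.single_le_sum
        (fun w _ => mul_nonneg (mul_nonneg (hP0 w ω') (hτ w).1.le) (hμ0 w))
        (Finset.mem_univ ω)
    linarith [hη0 ω']
  -- entries of powers are nonnegative
  have hpow0 : ∀ n ω ω', 0 ≤ (P ^ n) ω ω' := by
    intro n
    induction n with
    | zero =>
      intro ω ω'
      simp only [pow_zero, Matrix.one_apply]
      split <;> norm_num
    | succ n ih =>
      intro ω ω'
      rw [pow_succ, Matrix.mul_apply]
      exact Finset.sum_nonneg fun k _ => mul_nonneg (ih ω k) (hP0 k ω')
  -- n-step propagation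
  have key : ∀ n ω ω', 0 < μ ω → 0 < (P ^ n) ω ω' → 0 < μ ω' := by
    intro n
    induction n with
    | zero =>
      intro ω ω' hμω hpos
      simp only [pow_zero, Matrix.one_apply] at hpos
      split at hpos
      · exact ‹ω = ω'› ▸ hμω
      · norm_num at hpos
    | succ n ih =>
      intro ω ω' hμω hpos
      rw [pow_succ, Matrix.mul_apply] at hpos
      obtain ⟨k, _, hk⟩ := Finset.exists_lt_of_sum_lt (by simpa using hpos :
        ∑ k, (0 : ℝ) < ∑ k, (P ^ n) ω k * P k ω')
      have h1 : 0 < (P ^ n) ω k :=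
        lt_of_le_of_ne (hpow0 n ω k) (by
          intro h
          rw [← h] at hk
          simp at hk)
      have h2 : 0 < P k ω' := by
        by_contra h
        have : P k ω' = 0 := le_antisymm (not_lt.mp h) (hP0 k ω')
        rw [this, mul_zero] at hk
        exact absurd hk (lt_irrefl 0)
      exact step k ω' (ih ω k hμω h1) h2
  intro ω
  obtain ⟨n, _, hn⟩ := hPirr ω₀ ω
  exact key n ω₀ ω hμω₀ hn
end

section
/- In any stationary equilibrium (c̄_l, c̄_h, μ_l, μ_h) of the model, the stationary mass of each type is strictly positive in every state: μ_θ(ω) > 0 for every ω ∈ Ω and each θ ∈ {l, h}. Consequently the market belief is strictly interior: θ_l < θ̂(ω) < θ_h for every ω ∈ Ω. -/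
open MeasureTheory Finset

/-- The cumulative distribution function of `ν`: `F(a) = ν((−∞, a])`. -/
noncomputable def cdf (ν : Measure ℝ) (a : ℝ) : ℝ := (ν (Set.Iic a)).toReal

/-- The market belief about average seller quality in state `ω`:
`θ̂(ω) = θ_l + (θ_h − θ_l) μ_h(ω) / (μ_l(ω) + μ_h(ω))`. -/
noncomputable def belief {Ω : Type*} (θl θh : ℝ) (μl μh : Ω → ℝ) (ω : Ω) : ℝ :=
  θl + (θh - θl) * μh ω / (μl ω + μh ω)

/-- A stationary equilibrium `(c̄_l, c̄_h, μ_l, μ_h)`: the masses `μ_θ ≥ 0` satisfy the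
stationarity condition, beliefs are consistent (`μ_l + μ_h > 0` and the market belief is
`belief θl θh μl μh`), and sellers exit optimally:
`c̄_θ(ω) = θ̂(ω) + β Σ_{ω'} Π_θ(ω,ω') g(c̄_θ(ω'))`. -/
def IsStationaryEquilibrium {Ω : Type*} [Fintype Ω]
    (β θl θh : ℝ) (Pl Ph : Ω → Ω → ℝ) (ηl ηh : Ω → ℝ) (ν : Measure ℝ)
    (cl ch μl μh : Ω → ℝ) : Prop :=
  (∀ ω, 0 ≤ μl ω) ∧ (∀ ω, 0 ≤ μh ω) ∧
  (∀ ω', μl ω' = ∑ ω, Pl ω ω' * cdf ν (cl ω) * μl ω + ηl ω') ∧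
  (∀ ω', μh ω' = ∑ ω, Ph ω ω' * cdf ν (ch ω) * μh ω + ηh ω') ∧
  (∀ ω, 0 < μl ω + μh ω) ∧
  (∀ ω, cl ω = belief θl θh μl μh ω + β * ∑ ω', Pl ω ω' * gfun ν (cl ω')) ∧
  (∀ ω, ch ω = belief θl θh μl μh ω + β * ∑ ω', Ph ω ω' * gfun ν (ch ω'))

lemma matrix_pow_nonneg {Ω : Type*} [Fintype Ω] [DecidableEq Ω]
    (P : Matrix Ω Ω ℝ) (hP0 : ∀ ω ω', 0 ≤ P ω ω') (n : ℕ) :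
    ∀ ω ω', 0 ≤ (P ^ n) ω ω' := by
  induction n with
  | zero =>
    intro ω ω'
    simp [Matrix.one_apply]
    split <;> norm_num
  | succ n ih =>
    intro ω ω'
    rw [pow_succ, Matrix.mul_apply]
    exact Finset.sum_nonneg fun k _ => mul_nonneg (ih ω k) (hP0 k ω')

lemma mass_pos_aux {Ω : Type*} [Fintype Ω] [DecidableEq Ω]
    (P : Matrix Ω Ω ℝ) (hP0 : ∀ ω ω', 0 ≤ P ω ω')
    (hirr : ∀ ω ω', ∃ n : ℕ, 1 ≤ n ∧ 0 < (P ^ n) ω ω')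
    (η μ Fv : Ω → ℝ) (hμ0 : ∀ ω, 0 ≤ μ ω) (hη0 : ∀ ω, 0 ≤ η ω)
    (hη : ∃ ω, η ω ≠ 0) (hFpos : ∀ ω, 0 < Fv ω)
    (hstat : ∀ ω', μ ω' = ∑ ω, P ω ω' * Fv ω * μ ω + η ω') :
    ∀ ω, 0 < μ ω := by
  have hsum : ∀ ω', 0 ≤ ∑ ω, P ω ω' * Fv ω * μ ω := fun ω' =>
    Finset.sum_nonneg fun ω _ =>
      mul_nonneg (mul_nonneg (hP0 ω ω') (hFpos ω).le) (hμ0 ω)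
  obtain ⟨ω0, hω0⟩ := hη
  have hη0' : 0 < η ω0 := lt_of_le_of_ne (hη0 ω0) (Ne.symm hω0)
  have hμω0 : 0 < μ ω0 := by
    rw [hstat ω0]; exact add_pos_of_nonneg_of_pos (hsum ω0) hη0'
  -- step
  have step : ∀ ω ω', 0 < μ ω → 0 < P ω ω' → 0 < μ ω' := by
    intro ω ω' hμ hP
    rw [hstat ω']
    have h1 : 0 < P ω ω' * Fv ω * μ ω := mul_pos (mul_pos hP (hFpos ω)) hμ
    have h2 : P ω ω' * Fv ω * μ ω ≤ ∑ w, P w ω' * Fv w * μ w :=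
      Finset.single_le_sum (f := fun w => P w ω' * Fv w * μ w)
        (fun w _ => mul_nonneg (mul_nonneg (hP0 w ω') (hFpos w).le) (hμ0 w))
        (Finset.mem_univ ω)
    have := hη0 ω'
    linarith
  have path : ∀ n : ℕ, ∀ ω ω', 0 < (P ^ n) ω ω' → 0 < μ ω → 0 < μ ω' := by
    intro n
    induction n with
    | zero =>
      intro ω ω' h hμ
      by_cases heq : ω = ω'
      · exact heq ▸ hμ
      · simp [Matrix.one_apply, heq] at h
    | succ n ih =>
      intro ω ω' h hμ
      rw [pow_succ, Matrix.mul_apply] at h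
      obtain ⟨k, -, hk⟩ := Finset.exists_lt_of_sum_lt (by
        simpa using h : ∑ k, (0:ℝ) < ∑ k, (P ^ n) ω k * P k ω')
      have hk1 : 0 < (P ^ n) ω k := by
        by_contra hle
        push_neg at hle
        have : (P ^ n) ω k = 0 := le_antisymm hle (matrix_pow_nonneg P hP0 n ω k)
        rw [this] at hk; simp at hk
      have hk2 : 0 < P k ω' := by
        by_contra hle
        push_neg at hle
        have : P k ω' = 0 := le_antisymm hle (hP0 k ω')
        rw [this] at hk; simp at hk
      exact step k ω' (ih ω k hk1 hμ) hk2
  intro ω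
  obtain ⟨n, -, hn⟩ := hirr ω0 ω
  exact path n ω0 ω hn hμω0

/-- In any stationary equilibrium of the model, the stationary mass of each
type is strictly positive in every state, and consequently the market belief is strictly
interior: `θ_l < θ̂(ω) < θ_h` for every `ω`. -/
theorem equilibrium_mass_pos_and_belief_strict_interior
    {Ω : Type*} [Fintype Ω] [DecidableEq Ω] [Nonempty Ω]
    (θl θh : ℝ) (hθl : 0 < θl) (hθ : θl < θh)
    (Pl Ph : Matrix Ω Ω ℝ)
    (hPl0 : ∀ ω ω', 0 ≤ Pl ω ω') (hPl1 : ∀ ω, ∑ ω', Pl ω ω' = 1)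
    (hPh0 : ∀ ω ω', 0 ≤ Ph ω ω') (hPh1 : ∀ ω, ∑ ω', Ph ω ω' = 1)
    (hPlirr : ∀ ω ω', ∃ n : ℕ, 1 ≤ n ∧ 0 < (Pl ^ n) ω ω')
    (hPhirr : ∀ ω ω', ∃ n : ℕ, 1 ≤ n ∧ 0 < (Ph ^ n) ω ω')
    (ηl ηh : Ω → ℝ) (hηl0 : ∀ ω, 0 ≤ ηl ω) (hηh0 : ∀ ω, 0 ≤ ηh ω)
    (hηl : ∃ ω, ηl ω ≠ 0) (hηh : ∃ ω, ηh ω ≠ 0)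
    (ν : Measure ℝ) [IsProbabilityMeasure ν] (hint : Integrable (fun c : ℝ => c) ν)
    (hF : Continuous (cdf ν)) (hF01 : ∀ c : ℝ, 0 < cdf ν c ∧ cdf ν c < 1)
    (β : ℝ) (hβ0 : 0 < β) (hβ1 : β < 1)
    (cl ch μl μh : Ω → ℝ)
    (heq : IsStationaryEquilibrium β θl θh (fun ω ω' => Pl ω ω') (fun ω ω' => Ph ω ω')
      ηl ηh ν cl ch μl μh) :
    (∀ ω, 0 < μl ω ∧ 0 < μh ω) ∧
    (∀ ω, θl < belief θl θh μl μh ω ∧ belief θl θh μl μh ω < θh) := by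
  obtain ⟨hμl0, hμh0, hstl, hsth, hpos, -, -⟩ := heq
  have hl : ∀ ω, 0 < μl ω :=
    mass_pos_aux Pl hPl0 hPlirr ηl μl (fun ω => cdf ν (cl ω)) hμl0 hηl0 hηl
      (fun ω => (hF01 (cl ω)).1) hstl
  have hh : ∀ ω, 0 < μh ω :=
    mass_pos_aux Ph hPh0 hPhirr ηh μh (fun ω => cdf ν (ch ω)) hμh0 hηh0 hηh
      (fun ω => (hF01 (ch ω)).1) hsth
  refine ⟨fun ω => ⟨hl ω, hh ω⟩, fun ω => ?_⟩
  unfold belief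
  have h1 := hl ω
  have h2 := hh ω
  have hs : 0 < μl ω + μh ω := by linarith
  constructor
  · have : 0 < (θh - θl) * μh ω / (μl ω + μh ω) := div_pos (mul_pos (by linarith) h2) hs
    linarith
  · have hlt : (θh - θl) * μh ω / (μl ω + μh ω) < θh - θl := by
      rw [div_lt_iff₀ hs]
      nlinarith
    linarith
end
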